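/- arXiv:2108.10785 — 2 statements merged into one kernel-verified Lean document; each statement's English description precedes it below -/
import Mathlib

section
/- Let 0 < ι ≤ π/2 and let U be a random variable uniformly distributed on [0, 2π). Define Φ = arcsin(sin ι · sin U). Then the law of Φ is absolutely continuous with respect to Lebesgue measure, with density f_Φ(φ) = √2 · cos φ / (π · √(cos(2φ) − cos(2ι))) for φ ∈ (−ι, ι) and f_Φ(φ) = 0 for |φ| ≥ ι. -/
open Real MeasureTheory Set
open scoped ENNReal

private lemma sat_map_wd {s : Set ℝ} {f f' : ℝ → ℝ} (hs : MeasurableSet s)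
    (hf' : ∀ x ∈ s, HasDerivWithinAt f (f' x) s x) (hf : Set.InjOn f s) (hfm : Measurable f) :
    Measure.map f ((volume.restrict s).withDensity fun x => ENNReal.ofReal |f' x|) =
      volume.restrict (f '' s) := by
  have h := MeasureTheory.map_withDensity_abs_det_fderiv_eq_addHaar volume hs.nullMeasurableSet
    (fun x hx => (hf' x hx).hasFDerivWithinAt) hf
  simpa only [ContinuousLinearMap.det_toSpanSingleton] using h

private lemma sat_sin_bound {ι φ : ℝ} (hι0 : 0 < ι) (hι : ι ≤ π / 2)
    (hφ : φ ∈ Set.Ioo (-ι) ι) : -Real.sin ι < Real.sin φ ∧ Real.sin φ < Real.sin ι := by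
  have hπ := Real.pi_pos
  have h1 : ι ∈ Set.Icc (-(π/2)) (π/2) := ⟨by linarith, hι⟩
  have h2 : (-ι) ∈ Set.Icc (-(π/2)) (π/2) := ⟨by linarith, by linarith⟩
  have h3 : φ ∈ Set.Icc (-(π/2)) (π/2) := ⟨by linarith [hφ.1], by linarith [hφ.2]⟩
  constructor
  · have := Real.strictMonoOn_sin h2 h3 hφ.1
    rwa [Real.sin_neg] at this
  · exact Real.strictMonoOn_sin h3 h1 hφ.2

private lemma sat_deriv {ι φ : ℝ} (hι0 : 0 < ι) (hι : ι ≤ π / 2) (hφ : φ ∈ Set.Ioo (-ι) ι) :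
    HasDerivAt (fun x => Real.arcsin (Real.sin x / Real.sin ι))
      (Real.cos φ / Real.sqrt (Real.sin ι ^ 2 - Real.sin φ ^ 2)) φ := by
  have hπ := Real.pi_pos
  have hσ : 0 < Real.sin ι := Real.sin_pos_of_pos_of_lt_pi hι0 (by linarith)
  obtain ⟨hl, hr⟩ := sat_sin_bound hι0 hι hφ
  have hlt : Real.sin φ / Real.sin ι < 1 := (div_lt_one hσ).2 hr
  have hgt : -1 < Real.sin φ / Real.sin ι := by
    rw [lt_div_iff₀ hσ]; linarith
  have hX : 0 < Real.sin ι ^ 2 - Real.sin φ ^ 2 := by nlinarith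
  have h1 : HasDerivAt (fun x => Real.sin x / Real.sin ι) (Real.cos φ / Real.sin ι) φ :=
    (Real.hasDerivAt_sin φ).div_const _
  have h2 := Real.hasDerivAt_arcsin (ne_of_gt hgt) (ne_of_lt hlt)
  have h3 : HasDerivAt (fun x => Real.arcsin (Real.sin x / Real.sin ι))
      (1 / Real.sqrt (1 - (Real.sin φ / Real.sin ι) ^ 2) * (Real.cos φ / Real.sin ι)) φ :=
    by have := h2.comp φ h1; exact this
  convert h3 using 1
  have he : 1 - (Real.sin φ / Real.sin ι) ^ 2 = (Real.sin ι ^ 2 - Real.sin φ ^ 2) / Real.sin ι ^ 2 := by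
    field_simp
  rw [he, Real.sqrt_div hX.le, Real.sqrt_sq hσ.le]
  have hsX : 0 < Real.sqrt (Real.sin ι ^ 2 - Real.sin φ ^ 2) := Real.sqrt_pos.2 hX
  field_simp

private lemma sat_image_pos {ι : ℝ} (hι0 : 0 < ι) (hι : ι ≤ π / 2) :
    (fun φ => Real.arcsin (Real.sin φ / Real.sin ι)) '' Set.Ioo 0 ι = Set.Ioo 0 (π / 2) := by
  have hπ := Real.pi_pos
  have hσ : 0 < Real.sin ι := Real.sin_pos_of_pos_of_lt_pi hι0 (by linarith)
  ext y
  simp only [Set.mem_image, Set.mem_Ioo]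
  constructor
  · rintro ⟨φ, ⟨h0, h1⟩, rfl⟩
    have hsφ : 0 < Real.sin φ := Real.sin_pos_of_pos_of_lt_pi h0 (by linarith)
    have hlt : Real.sin φ < Real.sin ι :=
      Real.strictMonoOn_sin ⟨by linarith, by linarith⟩ ⟨by linarith, hι⟩ h1
    exact ⟨Real.arcsin_pos.2 (div_pos hsφ hσ),
      Real.arcsin_lt_pi_div_two.2 ((div_lt_one hσ).2 hlt)⟩
  · rintro ⟨hy0, hy2⟩
    have hsy : 0 < Real.sin y := Real.sin_pos_of_pos_of_lt_pi hy0 (by linarith)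
    have hsy1 : Real.sin y < 1 := by
      have := Real.strictMonoOn_sin (a := y) (b := π/2) ⟨by linarith, hy2.le⟩
        ⟨by linarith, le_refl _⟩ hy2
      rwa [Real.sin_pi_div_two] at this
    have hσ1 : Real.sin ι ≤ 1 := Real.sin_le_one ι
    refine ⟨Real.arcsin (Real.sin ι * Real.sin y), ⟨?_, ?_⟩, ?_⟩
    · exact Real.arcsin_pos.2 (mul_pos hσ hsy)
    · have h1 : Real.sin ι * Real.sin y < Real.sin ι := by nlinarith
      have h2 : Real.arcsin (Real.sin ι * Real.sin y) < Real.arcsin (Real.sin ι) :=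
        Real.strictMonoOn_arcsin ⟨by nlinarith, by nlinarith⟩ ⟨by linarith, hσ1⟩ h1
      rwa [Real.arcsin_sin (by linarith) hι] at h2
    · have hb1 : -1 ≤ Real.sin ι * Real.sin y := by nlinarith
      have hb2 : Real.sin ι * Real.sin y ≤ 1 := by nlinarith
      rw [Real.sin_arcsin hb1 hb2, mul_div_cancel_left₀ _ hσ.ne',
        Real.arcsin_sin (by linarith) hy2.le]

private lemma sat_image_neg {ι : ℝ} (hι0 : 0 < ι) (hι : ι ≤ π / 2) :
    (fun φ => Real.arcsin (Real.sin φ / Real.sin ι)) '' Set.Ioo (-ι) 0 = Set.Ioo (-(π / 2)) 0 := by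
  have hπ := Real.pi_pos
  have hσ : 0 < Real.sin ι := Real.sin_pos_of_pos_of_lt_pi hι0 (by linarith)
  ext y
  simp only [Set.mem_image, Set.mem_Ioo]
  constructor
  · rintro ⟨φ, ⟨h0, h1⟩, rfl⟩
    have hsφ : Real.sin φ < 0 := by
      have := Real.sin_pos_of_pos_of_lt_pi (x := -φ) (by linarith) (by linarith)
      rw [Real.sin_neg] at this; linarith
    have hgt : -Real.sin ι < Real.sin φ := (sat_sin_bound hι0 hι ⟨h0, by linarith⟩).1
    constructor
    · refine Real.neg_pi_div_two_lt_arcsin.2 ?_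
      rw [lt_div_iff₀ hσ]; linarith
    · have : Real.arcsin (Real.sin φ / Real.sin ι) < Real.arcsin 0 :=
        Real.strictMonoOn_arcsin
          ⟨by rw [le_div_iff₀ hσ]; nlinarith, by rw [div_le_one hσ]; nlinarith⟩
          ⟨by norm_num, by norm_num⟩ (by exact div_neg_of_neg_of_pos hsφ hσ)
      rwa [Real.arcsin_zero] at this
  · rintro ⟨hy0, hy2⟩
    have hsy : Real.sin y < 0 := by
      have := Real.sin_pos_of_pos_of_lt_pi (x := -y) (by linarith) (by linarith)
      rw [Real.sin_neg] at this; linarith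
    have hsy1 : -1 < Real.sin y := by
      have := Real.strictMonoOn_sin (a := -(π/2)) (b := y) ⟨le_refl _, by linarith⟩
        ⟨by linarith, by linarith⟩ hy0
      rw [Real.sin_neg, Real.sin_pi_div_two] at this; linarith
    have hσ1 : Real.sin ι ≤ 1 := Real.sin_le_one ι
    refine ⟨Real.arcsin (Real.sin ι * Real.sin y), ⟨?_, ?_⟩, ?_⟩
    · have h1 : -Real.sin ι < Real.sin ι * Real.sin y := by nlinarith
      have h2 : Real.arcsin (-Real.sin ι) < Real.arcsin (Real.sin ι * Real.sin y) :=
        Real.strictMonoOn_arcsin ⟨by linarith, by linarith⟩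
          ⟨by nlinarith, by nlinarith⟩ h1
      rwa [Real.arcsin_neg, Real.arcsin_sin (by linarith) hι] at h2
    · have : Real.arcsin (Real.sin ι * Real.sin y) < Real.arcsin 0 :=
        Real.strictMonoOn_arcsin ⟨by nlinarith, by nlinarith⟩
          ⟨by norm_num, by norm_num⟩ (by nlinarith)
      rwa [Real.arcsin_zero] at this
    · have hb1 : -1 ≤ Real.sin ι * Real.sin y := by nlinarith
      have hb2 : Real.sin ι * Real.sin y ≤ 1 := by nlinarith
      rw [Real.sin_arcsin hb1 hb2, mul_div_cancel_left₀ _ hσ.ne',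
        Real.arcsin_sin (by linarith) (by linarith)]

/-- Latitude distribution of a satellite uniformly distributed along a circular orbit
inclined at angle `ι`: if `U` is uniform on `[0, 2π)` and `Φ = arcsin (sin ι · sin U)`,
then the law of `Φ` has Lebesgue density
`√2 cos φ / (π √(cos 2φ - cos 2ι))` on `(-ι, ι)` and `0` for `|φ| ≥ ι`. -/
theorem stmt_0 {Ω : Type*} [MeasureSpace Ω] (P : Measure Ω) [IsProbabilityMeasure P]
    (ι : ℝ) (hι0 : 0 < ι) (hι : ι ≤ π / 2)
    (U : Ω → ℝ) (hU : Measurable U)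
    (hUlaw : Measure.map U P = (ENNReal.ofReal (2 * π))⁻¹ • volume.restrict (Set.Ico 0 (2 * π))) :
    Measure.map (fun ω => Real.arcsin (Real.sin ι * Real.sin (U ω))) P =
      volume.withDensity (fun φ =>
        if |φ| < ι then
          ENNReal.ofReal (Real.sqrt 2 * Real.cos φ /
            (π * Real.sqrt (Real.cos (2 * φ) - Real.cos (2 * ι))))
        else 0) := by
  have hπ := Real.pi_pos
  have hσ : 0 < Real.sin ι := Real.sin_pos_of_pos_of_lt_pi hι0 (by linarith)
  set g : ℝ → ℝ := fun u => Real.arcsin (Real.sin ι * Real.sin u) with hgdef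
  set D : ℝ → ℝ≥0∞ :=
    fun φ => ENNReal.ofReal (Real.cos φ / Real.sqrt (Real.sin ι ^ 2 - Real.sin φ ^ 2)) with hDdef
  have hgm : Measurable g :=
    (Real.continuous_arcsin.comp (continuous_const.mul Real.continuous_sin)).measurable
  have hd_meas : Measurable D := by
    refine Measurable.ennreal_ofReal (Measurable.div Real.continuous_cos.measurable ?_)
    exact (Real.continuous_sqrt.comp (continuous_const.sub (Real.continuous_sin.pow 2))).measurable
  -- helper bounds
  have hb : ∀ φ ∈ Set.Ioo (-ι) ι, -1 ≤ Real.sin φ / Real.sin ι ∧ Real.sin φ / Real.sin ι ≤ 1 := by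
    intro φ hφ
    obtain ⟨h1, h2⟩ := sat_sin_bound hι0 hι hφ
    constructor
    · rw [le_div_iff₀ hσ]; linarith
    · rw [div_le_one hσ]; linarith
  have hkey : ∀ φ ∈ Set.Ioo (-ι) ι, ∀ u : ℝ, Real.sin u = Real.sin φ / Real.sin ι →
      Real.arcsin (Real.sin ι * Real.sin u) = φ := by
    intro φ hφ u hu
    rw [hu, show Real.sin ι * (Real.sin φ / Real.sin ι) = Real.sin φ by field_simp]
    exact Real.arcsin_sin (by linarith [hφ.1]) (by linarith [hφ.2])
  -- rewrite the map through U
  have hrw : (fun ω => Real.arcsin (Real.sin ι * Real.sin (U ω))) = g ∘ U := rfl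
  rw [hrw, ← Measure.map_map hgm hU, hUlaw, Measure.map_smul]
  -- decomposition of [0, 2π)
  set S1 : Set ℝ := Set.Ioo 0 (π/2) with hS1
  set S2 : Set ℝ := Set.Ioo (π/2) π with hS2
  set S3 : Set ℝ := Set.Ioo π (3*π/2) with hS3
  set S4 : Set ℝ := Set.Ioo (3*π/2) (2*π) with hS4
  have dIoo : ∀ a b c d : ℝ, b ≤ c → Disjoint (Set.Ioo a b) (Set.Ioo c d) := by
    intro a b c d h
    rw [Set.disjoint_left]
    rintro x ⟨_, h1⟩ ⟨h2, _⟩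
    linarith
  have hdecomp : volume.restrict (Set.Ico 0 (2*π)) =
      volume.restrict S1 + volume.restrict S2 + volume.restrict S3 + volume.restrict S4 := by
    set Sall : Set ℝ := S1 ∪ S2 ∪ S3 ∪ S4 with hSall
    have hsub : Sall ⊆ Set.Ico 0 (2*π) := by
      intro x hx
      simp only [hSall, hS1, hS2, hS3, hS4, Set.mem_union, Set.mem_Ioo] at hx
      rcases hx with ((⟨a, b⟩ | ⟨a, b⟩) | ⟨a, b⟩) | ⟨a, b⟩ <;>
        exact ⟨by linarith, by linarith⟩
    have hdiff : Set.Ico 0 (2*π) \ Sall ⊆ {0, π/2, π, 3*π/2} := by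
      rintro x ⟨⟨h0, h2⟩, hn⟩
      simp only [hSall, hS1, hS2, hS3, hS4, Set.mem_union, Set.mem_Ioo, not_or] at hn
      obtain ⟨⟨⟨n1, n2⟩, n3⟩, n4⟩ := hn
      simp only [Set.mem_insert_iff, Set.mem_singleton_iff]
      by_contra hc
      push_neg at hc
      obtain ⟨c0, c1, c2, c3⟩ := hc
      have p0 : 0 < x := lt_of_le_of_ne h0 (Ne.symm c0)
      have p1 : π/2 < x := lt_of_le_of_ne (le_of_not_gt fun h => n1 ⟨p0, h⟩) (Ne.symm c1)
      have p2 : π < x := lt_of_le_of_ne (le_of_not_gt fun h => n2 ⟨p1, h⟩) (Ne.symm c2)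
      have p3 : 3*π/2 < x := lt_of_le_of_ne (le_of_not_gt fun h => n3 ⟨p2, h⟩) (Ne.symm c3)
      exact n4 ⟨p3, h2⟩
    have hae : (Set.Ico (0:ℝ) (2*π)) =ᵐ[volume] (Sall : Set ℝ) := by
      rw [MeasureTheory.ae_eq_set]
      constructor
      · exact measure_mono_null hdiff ((Set.toFinite _).measure_zero volume)
      · rw [Set.diff_eq_empty.mpr hsub]; exact measure_empty
    rw [Measure.restrict_congr_set hae, hSall,
      Measure.restrict_union (Set.disjoint_union_left.2
        ⟨Set.disjoint_union_left.2 ⟨dIoo _ _ _ _ (by linarith), dIoo _ _ _ _ (by linarith)⟩,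
          dIoo _ _ _ _ le_rfl⟩) measurableSet_Ioo,
      Measure.restrict_union (Set.disjoint_union_left.2
        ⟨dIoo _ _ _ _ (by linarith), dIoo _ _ _ _ le_rfl⟩) measurableSet_Ioo,
      Measure.restrict_union (dIoo _ _ _ _ le_rfl) measurableSet_Ioo]
  -- generic piece computation
  have hpiece : ∀ c e : ℝ, |e| = 1 → ∀ T : Set ℝ, T ⊆ Set.Ioo (-ι) ι → MeasurableSet T →
      (∀ φ ∈ T, Real.arcsin (Real.sin ι *
        Real.sin (c + e * Real.arcsin (Real.sin φ / Real.sin ι))) = φ) →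
      Measure.map g
        (volume.restrict ((fun φ => c + e * Real.arcsin (Real.sin φ / Real.sin ι)) '' T)) =
      (volume.restrict T).withDensity D := by
    intro c e he T hT hTm hg
    set h : ℝ → ℝ := fun φ => c + e * Real.arcsin (Real.sin φ / Real.sin ι) with hhdef
    have hhm : Measurable h :=
      (continuous_const.add (continuous_const.mul
        (Real.continuous_arcsin.comp (Real.continuous_sin.div_const _)))).measurable
    have hinj : Set.InjOn h T := by
      intro a ha b hb' hab
      have h1 := hg a ha
      have h2 := hg b hb'
      rw [← h1, ← h2]
      exact congrArg (fun t => Real.arcsin (Real.sin ι * Real.sin t)) hab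
    have hder : ∀ φ ∈ T, HasDerivWithinAt h
        (e * (Real.cos φ / Real.sqrt (Real.sin ι ^ 2 - Real.sin φ ^ 2))) T φ :=
      fun φ hφ => (((sat_deriv hι0 hι (hT hφ)).const_mul e).const_add c).hasDerivWithinAt
    have hmap := sat_map_wd hTm hder hinj hhm
    have habs : ((volume.restrict T).withDensity fun x =>
        ENNReal.ofReal |e * (Real.cos x / Real.sqrt (Real.sin ι ^ 2 - Real.sin x ^ 2))|) =
        (volume.restrict T).withDensity D := by
      apply withDensity_congr_ae
      filter_upwards [ae_restrict_mem hTm] with x hx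
      have hx' := hT hx
      have hcx : 0 ≤ Real.cos x :=
        Real.cos_nonneg_of_mem_Icc ⟨by linarith [hx'.1], by linarith [hx'.2]⟩
      have hnn : 0 ≤ Real.cos x / Real.sqrt (Real.sin ι ^ 2 - Real.sin x ^ 2) :=
        div_nonneg hcx (Real.sqrt_nonneg _)
      rw [abs_mul, he, one_mul, abs_of_nonneg hnn]
    rw [← habs, ← hmap, Measure.map_map hgm hhm]
    have hae2 : g ∘ h =ᵐ[(volume.restrict T).withDensity fun x =>
        ENNReal.ofReal |e * (Real.cos x / Real.sqrt (Real.sin ι ^ 2 - Real.sin x ^ 2))|] id := by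
      refine Filter.Eventually.filter_mono (withDensity_absolutelyContinuous _ _).ae_le ?_
      filter_upwards [ae_restrict_mem hTm] with x hx
      exact hg x hx
    rw [Measure.map_congr hae2, Measure.map_id]
  have hT1sub : Set.Ioo (0:ℝ) ι ⊆ Set.Ioo (-ι) ι := fun φ h => ⟨by linarith [h.1], h.2⟩
  have hT3sub : Set.Ioo (-ι) (0:ℝ) ⊆ Set.Ioo (-ι) ι := fun φ h => ⟨h.1, by linarith [h.2]⟩
  -- images
  have himg1 : (fun φ => (0:ℝ) + 1 * Real.arcsin (Real.sin φ / Real.sin ι)) '' Set.Ioo 0 ι = S1 := by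
    rw [show (fun φ => (0:ℝ) + 1 * Real.arcsin (Real.sin φ / Real.sin ι)) =
      fun φ => Real.arcsin (Real.sin φ / Real.sin ι) by funext φ; ring]
    exact sat_image_pos hι0 hι
  have himg2 : (fun φ => π + (-1) * Real.arcsin (Real.sin φ / Real.sin ι)) '' Set.Ioo 0 ι = S2 := by
    rw [show (fun φ => π + (-1) * Real.arcsin (Real.sin φ / Real.sin ι)) =
      (fun x => π - x) ∘ fun φ => Real.arcsin (Real.sin φ / Real.sin ι) by
        funext φ; simp [Function.comp]; ring]
    rw [Set.image_comp, sat_image_pos hι0 hι, Set.image_const_sub_Ioo]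
    rw [hS2, show π - π/2 = π/2 by ring, sub_zero]
  have himg3 : (fun φ => π + (-1) * Real.arcsin (Real.sin φ / Real.sin ι)) ''
      Set.Ioo (-ι) 0 = S3 := by
    rw [show (fun φ => π + (-1) * Real.arcsin (Real.sin φ / Real.sin ι)) =
      (fun x => π - x) ∘ fun φ => Real.arcsin (Real.sin φ / Real.sin ι) by
        funext φ; simp [Function.comp]; ring]
    rw [Set.image_comp, sat_image_neg hι0 hι, Set.image_const_sub_Ioo]
    rw [hS3, sub_zero, show π - -(π/2) = 3*π/2 by ring]
  have himg4 : (fun φ => 2*π + 1 * Real.arcsin (Real.sin φ / Real.sin ι)) ''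
      Set.Ioo (-ι) 0 = S4 := by
    rw [show (fun φ => 2*π + 1 * Real.arcsin (Real.sin φ / Real.sin ι)) =
      (fun x => 2*π + x) ∘ fun φ => Real.arcsin (Real.sin φ / Real.sin ι) by
        funext φ; simp [Function.comp]]
    rw [Set.image_comp, sat_image_neg hι0 hι, Set.image_const_add_Ioo]
    rw [hS4, show 2*π + -(π/2) = 3*π/2 by ring, add_zero]
  -- piece applications
  have hc1 : Measure.map g (volume.restrict S1) = (volume.restrict (Set.Ioo 0 ι)).withDensity D := by
    rw [← himg1]
    refine hpiece 0 1 (by norm_num) _ hT1sub measurableSet_Ioo ?_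
    intro φ hφ
    obtain ⟨b1, b2⟩ := hb φ (hT1sub hφ)
    exact hkey φ (hT1sub hφ) _ (by rw [zero_add, one_mul, Real.sin_arcsin b1 b2])
  have hc2 : Measure.map g (volume.restrict S2) = (volume.restrict (Set.Ioo 0 ι)).withDensity D := by
    rw [← himg2]
    refine hpiece π (-1) (by norm_num) _ hT1sub measurableSet_Ioo ?_
    intro φ hφ
    obtain ⟨b1, b2⟩ := hb φ (hT1sub hφ)
    refine hkey φ (hT1sub hφ) _ ?_
    rw [show π + (-1) * Real.arcsin (Real.sin φ / Real.sin ι) =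
      π - Real.arcsin (Real.sin φ / Real.sin ι) by ring, Real.sin_pi_sub,
      Real.sin_arcsin b1 b2]
  have hc3 : Measure.map g (volume.restrict S3) =
      (volume.restrict (Set.Ioo (-ι) 0)).withDensity D := by
    rw [← himg3]
    refine hpiece π (-1) (by norm_num) _ hT3sub measurableSet_Ioo ?_
    intro φ hφ
    obtain ⟨b1, b2⟩ := hb φ (hT3sub hφ)
    refine hkey φ (hT3sub hφ) _ ?_
    rw [show π + (-1) * Real.arcsin (Real.sin φ / Real.sin ι) =
      π - Real.arcsin (Real.sin φ / Real.sin ι) by ring, Real.sin_pi_sub,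
      Real.sin_arcsin b1 b2]
  have hc4 : Measure.map g (volume.restrict S4) =
      (volume.restrict (Set.Ioo (-ι) 0)).withDensity D := by
    rw [← himg4]
    refine hpiece (2*π) 1 (by norm_num) _ hT3sub measurableSet_Ioo ?_
    intro φ hφ
    obtain ⟨b1, b2⟩ := hb φ (hT3sub hφ)
    refine hkey φ (hT3sub hφ) _ ?_
    rw [show 2*π + 1 * Real.arcsin (Real.sin φ / Real.sin ι) =
      Real.arcsin (Real.sin φ / Real.sin ι) + 2*π by ring, Real.sin_add_two_pi,
      Real.sin_arcsin b1 b2]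
  rw [hdecomp, Measure.map_add _ _ hgm, Measure.map_add _ _ hgm, Measure.map_add _ _ hgm,
    hc1, hc2, hc3, hc4, ← withDensity_indicator (measurableSet_Ioo (a := (0:ℝ)) (b := ι)) D,
    ← withDensity_indicator (measurableSet_Ioo (a := -ι) (b := (0:ℝ))) D]
  set I1 : ℝ → ℝ≥0∞ := (Set.Ioo 0 ι).indicator D with hI1def
  set I3 : ℝ → ℝ≥0∞ := (Set.Ioo (-ι) 0).indicator D with hI3def
  have hI1m : Measurable I1 := hd_meas.indicator measurableSet_Ioo
  have hI3m : Measurable I3 := hd_meas.indicator measurableSet_Ioo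
  rw [← withDensity_add_left hI1m I1,
    ← withDensity_add_left (show Measurable (I1 + I1) from hI1m.add hI1m) I3,
    ← withDensity_add_left (show Measurable (I1 + I1 + I3) from (hI1m.add hI1m).add hI3m) I3,
    ← withDensity_smul _ (show Measurable (I1 + I1 + I3 + I3) from ((hI1m.add hI1m).add hI3m).add hI3m)]
  apply withDensity_congr_ae
  have hnull : volume ({-ι, 0, ι} : Set ℝ) = 0 := (Set.toFinite _).measure_zero volume
  filter_upwards [compl_mem_ae_iff.2 hnull] with φ hφ
  simp only [Set.mem_compl_iff, Set.mem_insert_iff, Set.mem_singleton_iff, not_or] at hφ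
  obtain ⟨hφ1, hφ2, hφ3⟩ := hφ
  simp only [Pi.smul_apply, Pi.add_apply, smul_eq_mul]
  by_cases hlt : |φ| < ι
  · rw [if_pos hlt]
    obtain ⟨hgt, hlt'⟩ := abs_lt.1 hlt
    have hmem : φ ∈ Set.Ioo (-ι) ι := ⟨hgt, hlt'⟩
    obtain ⟨hsl, hsr⟩ := sat_sin_bound hι0 hι hmem
    have hX : 0 < Real.sin ι ^ 2 - Real.sin φ ^ 2 := by nlinarith
    have hcφ : 0 ≤ Real.cos φ :=
      Real.cos_nonneg_of_mem_Icc ⟨by linarith, by linarith⟩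
    have hdnn : 0 ≤ Real.cos φ / Real.sqrt (Real.sin ι ^ 2 - Real.sin φ ^ 2) :=
      div_nonneg hcφ (Real.sqrt_nonneg _)
    have hcos2 : Real.cos (2*φ) - Real.cos (2*ι) = 2*(Real.sin ι ^ 2 - Real.sin φ ^ 2) := by
      rw [Real.cos_two_mul, Real.cos_two_mul]
      nlinarith [Real.sin_sq_add_cos_sq φ, Real.sin_sq_add_cos_sq ι]
    have hsX : 0 < Real.sqrt (Real.sin ι ^ 2 - Real.sin φ ^ 2) := Real.sqrt_pos.2 hX
    have hsq : Real.sqrt (Real.cos (2*φ) - Real.cos (2*ι)) =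
        Real.sqrt 2 * Real.sqrt (Real.sin ι ^ 2 - Real.sin φ ^ 2) := by
      rw [hcos2, Real.sqrt_mul (by norm_num : (0:ℝ) ≤ 2)]
    have h2π : (0:ℝ) < 2*π := by linarith
    have hcombine : ∀ a : ℝ, 0 ≤ a → (ENNReal.ofReal (2*π))⁻¹ *
        (ENNReal.ofReal a + ENNReal.ofReal a) = ENNReal.ofReal ((a+a)/(2*π)) := by
      intro a ha
      rw [← ENNReal.ofReal_add ha ha, ENNReal.ofReal_div_of_pos h2π, ENNReal.div_eq_inv_mul]
    have hsqrt2 : 0 < Real.sqrt 2 := by positivity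
    rcases (Ne.lt_or_gt hφ2 : φ < 0 ∨ 0 < φ) with hneg | hpos
    · have hm3 : φ ∈ Set.Ioo (-ι) 0 := ⟨hgt, hneg⟩
      have hn1 : φ ∉ Set.Ioo 0 ι := fun h => absurd h.1 (not_lt.2 hneg.le)
      rw [hI1def, hI3def, Set.indicator_of_notMem hn1, Set.indicator_of_mem hm3, hDdef]
      rw [zero_add, zero_add, hcombine _ hdnn, hsq]
      congr 1
      field_simp
      ring
    · have hm1 : φ ∈ Set.Ioo 0 ι := ⟨hpos, hlt'⟩
      have hn3 : φ ∉ Set.Ioo (-ι) 0 := fun h => absurd h.2 (not_lt.2 hpos.le)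
      rw [hI1def, hI3def, Set.indicator_of_mem hm1, Set.indicator_of_notMem hn3, hDdef]
      rw [add_zero, add_zero, hcombine _ hdnn, hsq]
      congr 1
      field_simp
      ring
  · rw [if_neg hlt]
    have hn1 : φ ∉ Set.Ioo 0 ι := fun h => hlt (abs_lt.2 ⟨by linarith [h.1], h.2⟩)
    have hn3 : φ ∉ Set.Ioo (-ι) 0 := fun h => hlt (abs_lt.2 ⟨h.1, by linarith [h.2]⟩)
    rw [hI1def, hI3def, Set.indicator_of_notMem hn1, Set.indicator_of_notMem hn3]
    simp
end

section
/- Let (Ω, ℱ, P) be a probability space carrying nonnegative real random variables G, X, I, R₀ with X > 0 and R₀ > 0 almost surely. Let m ≥ 1 be an integer and suppose G has the gamma distribution with shape m and rate m, and G is independent of the triple (X, I, R₀). Let p₀ > 0, σ² > 0, α > 0 be constants and K ≥ 1 an integer. Then, as an identity in [0, ∞], (1/K) · E[ log₂(1 + p₀ · G · X · R₀^{−α} / (I + σ²)) ] = (1/K) · ∫₀^∞ E[ exp(−S_t·(σ² + I)) · Σ_{k=0}^{m−1} (S_t·(σ² + I))^k / k! ] dt, where S_t = m (2^t − 1) R₀^{α}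 / (p₀ X). -/
open Real MeasureTheory ProbabilityTheory Filter Set Topology

lemma aux_measurable_rpow_const (c : ℝ) : Measurable fun x : ℝ => x ^ c := by measurability

lemma aux_hasDerivAt (r : ℝ) (m : ℕ) (hm : 1 ≤ m) (x : ℝ) :
    HasDerivAt
      (fun y : ℝ => -(Real.exp (-(r*y)) * ∑ k ∈ Finset.range m, (r*y)^k / (Nat.factorial k)))
      (r * Real.exp (-(r*x)) * (r*x)^(m-1) / (Nat.factorial (m-1))) x := by
  induction m, hm using Nat.le_induction with
  | base =>
    have h1 : HasDerivAt (fun y : ℝ => -(r*y)) (-r) x := by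
      simpa using ((hasDerivAt_id x).const_mul r).fun_neg
    have h2 : HasDerivAt (fun y : ℝ => -Real.exp (-(r*y))) (-(Real.exp (-(r*x)) * -r)) x :=
      (h1.exp).fun_neg
    have : HasDerivAt (fun y : ℝ => -(Real.exp (-(r*y)))) (r * Real.exp (-(r*x))) x := by
      convert h2 using 1; ring
    refine this.congr_of_eventuallyEq (Filter.Eventually.of_forall fun y => ?_) |>.congr_deriv ?_
    · simp
    · simp
  | succ n hn ih =>
    have h1 : HasDerivAt (fun y : ℝ => -(r*y)) (-r) x := by
      simpa using ((hasDerivAt_id x).const_mul r).fun_neg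
    have hexp : HasDerivAt (fun y : ℝ => Real.exp (-(r*y))) (Real.exp (-(r*x)) * (-r)) x :=
      h1.exp
    have hry : HasDerivAt (fun y : ℝ => r*y) r x := by
      simpa using (hasDerivAt_id x).const_mul r
    have hpow : HasDerivAt (fun y : ℝ => (r*y)^n) ((n : ℝ) * (r*x)^(n-1) * r) x := hry.pow n
    have hterm : HasDerivAt (fun y : ℝ => Real.exp (-(r*y)) * ((r*y)^n / (Nat.factorial n)))
        (Real.exp (-(r*x)) * (-r) * ((r*x)^n / (Nat.factorial n))
          + Real.exp (-(r*x)) * ((n : ℝ) * (r*x)^(n-1) * r / (Nat.factorial n))) x :=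
      hexp.mul (hpow.div_const _)
    have hsum : HasDerivAt (fun y : ℝ =>
        -(Real.exp (-(r*y)) * ∑ k ∈ Finset.range n, (r*y)^k / (Nat.factorial k))
          - Real.exp (-(r*y)) * ((r*y)^n / (Nat.factorial n)))
        (r * Real.exp (-(r*x)) * (r*x)^(n-1) / (Nat.factorial (n-1))
          - (Real.exp (-(r*x)) * (-r) * ((r*x)^n / (Nat.factorial n))
            + Real.exp (-(r*x)) * ((n : ℝ) * (r*x)^(n-1) * r / (Nat.factorial n)))) x :=
      ih.fun_sub hterm
    have heq : (fun y : ℝ =>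
        -(Real.exp (-(r*y)) * ∑ k ∈ Finset.range n, (r*y)^k / (Nat.factorial k))
          - Real.exp (-(r*y)) * ((r*y)^n / (Nat.factorial n)))
        = fun y : ℝ =>
        -(Real.exp (-(r*y)) * ∑ k ∈ Finset.range (n+1), (r*y)^k / (Nat.factorial k)) := by
      funext y
      rw [Finset.sum_range_succ]
      ring
    rw [heq] at hsum
    convert hsum using 1
    have hfac : ((Nat.factorial n : ℝ)) = (n : ℝ) * (Nat.factorial (n-1)) := by
      rw [← Nat.cast_mul]
      congr 1
      exact (Nat.mul_factorial_pred (by omega)).symm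
    have hfn : (Nat.factorial n : ℝ) ≠ 0 := Nat.cast_ne_zero.mpr (Nat.factorial_ne_zero n)
    have hfn1 : (Nat.factorial (n-1) : ℝ) ≠ 0 := Nat.cast_ne_zero.mpr (Nat.factorial_ne_zero _)
    have hrx : (r*x)^n = (r*x)^(n-1) * (r*x) := by
      conv_lhs => rw [show n = (n-1) + 1 by omega]
      rw [pow_succ]
    simp only [Nat.add_sub_cancel]
    field_simp
    rw [hrx, hfac]
    ring

lemma aux_tendsto (r : ℝ) (hr : 0 < r) (m : ℕ) :
    Tendsto (fun y : ℝ => -(Real.exp (-(r*y)) * ∑ k ∈ Finset.range m, (r*y)^k / (Nat.factorial k)))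
      atTop (𝓝 0) := by
  have hcomp : Tendsto (fun y : ℝ => r * y) atTop atTop :=
    Tendsto.const_mul_atTop hr tendsto_id
  have hterm : ∀ k : ℕ, Tendsto (fun y : ℝ => Real.exp (-(r*y)) * ((r*y)^k / (Nat.factorial k)))
      atTop (𝓝 0) := by
    intro k
    have h0 : Tendsto (fun u : ℝ => u ^ k * Real.exp (-u)) atTop (𝓝 0) :=
      tendsto_pow_mul_exp_neg_atTop_nhds_zero k
    have := (h0.comp hcomp).div_const (Nat.factorial k : ℝ)
    simp only [zero_div] at this
    refine this.congr fun y => ?_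
    simp only [Function.comp]
    ring
  have hsum : Tendsto (fun y : ℝ => ∑ k ∈ Finset.range m,
      Real.exp (-(r*y)) * ((r*y)^k / (Nat.factorial k))) atTop (𝓝 0) := by
    have := tendsto_finset_sum (Finset.range m) (fun k _ => hterm k)
    simpa using this
  have := hsum.neg
  simp only [neg_zero] at this
  refine this.congr fun y => ?_
  rw [Finset.mul_sum]

lemma aux_integrableOn (r : ℝ) (hr : 0 < r) (n : ℕ) (s : ℝ) (hs : 0 ≤ s) :
    IntegrableOn (fun x : ℝ => r * Real.exp (-(r*x)) * (r*x)^n / (Nat.factorial n)) (Ioi s) := by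
  have h0 : IntegrableOn (fun x : ℝ => x ^ ((n : ℝ)) * Real.exp (-r * x ^ (1:ℝ))) (Ioi 0) :=
    integrableOn_rpow_mul_exp_neg_mul_rpow (lt_of_lt_of_le (by norm_num) (Nat.cast_nonneg n))
      one_pos hr
  have h1 : IntegrableOn (fun x : ℝ => x ^ n * Real.exp (-(r * x))) (Ioi 0) := by
    refine (integrableOn_congr_fun (fun x hx => ?_) measurableSet_Ioi).mp h0
    rw [Real.rpow_natCast, Real.rpow_one, neg_mul]
  have h2 : IntegrableOn (fun x : ℝ => x ^ n * Real.exp (-(r * x))) (Ioi s) :=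
    h1.mono_set (Ioi_subset_Ioi hs)
  have h3 := (h2.const_mul (r * r^n)).div_const (Nat.factorial n : ℝ)
  refine (integrableOn_congr_fun (fun x _ => ?_) measurableSet_Ioi).mp h3
  rw [mul_pow]
  ring

lemma aux_gamma_tail (m : ℕ) (hm : 1 ≤ m) (r : ℝ) (hr : 0 < r) (s : ℝ) (hs : 0 ≤ s) :
    gammaMeasure (m : ℝ) r (Set.Ioi s) =
      ENNReal.ofReal (Real.exp (-(r*s)) * ∑ k ∈ Finset.range m, (r*s)^k / (Nat.factorial k)) := by
  have hGamma : Real.Gamma (m : ℝ) = (Nat.factorial (m-1) : ℝ) := by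
    rw [show ((m : ℝ)) = ((m-1 : ℕ) : ℝ) + 1 by push_cast [Nat.cast_sub hm]; ring]
    exact Real.Gamma_nat_eq_factorial _
  have hpdf_eq : ∀ x ∈ Ioi s, gammaPDF (m : ℝ) r x =
      ENNReal.ofReal (r * Real.exp (-(r*x)) * (r*x)^(m-1) / (Nat.factorial (m-1))) := by
    intro x hx
    have hx0 : 0 < x := lt_of_le_of_lt hs hx
    rw [gammaPDF_of_nonneg hx0.le, hGamma]
    congr 1
    rw [Real.rpow_natCast, show ((m : ℝ) - 1) = ((m - 1 : ℕ) : ℝ) by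
      push_cast [Nat.cast_sub hm]; ring, Real.rpow_natCast, mul_pow]
    have : r ^ m = r ^ (m-1) * r := by
      conv_lhs => rw [show m = (m-1) + 1 by omega]
      rw [pow_succ]
    rw [this]
    ring
  have key : ∫ x in Ioi s, r * Real.exp (-(r*x)) * (r*x)^(m-1) / (Nat.factorial (m-1))
      = Real.exp (-(r*s)) * ∑ k ∈ Finset.range m, (r*s)^k / (Nat.factorial k) := by
    have := integral_Ioi_of_hasDerivAt_of_tendsto' (a := s)
      (f := fun y : ℝ => -(Real.exp (-(r*y)) * ∑ k ∈ Finset.range m, (r*y)^k / (Nat.factorial k)))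
      (f' := fun x : ℝ => r * Real.exp (-(r*x)) * (r*x)^(m-1) / (Nat.factorial (m-1)))
      (fun x _ => aux_hasDerivAt r m hm x) (aux_integrableOn r hr (m-1) s hs)
      (aux_tendsto r hr m)
    rw [this]
    ring
  rw [gammaMeasure, withDensity_apply _ measurableSet_Ioi,
    setLIntegral_congr_fun measurableSet_Ioi hpdf_eq,
    ← ofReal_integral_eq_lintegral_ofReal, key]
  · exact aux_integrableOn r hr (m-1) s hs
  · refine (ae_restrict_iff' measurableSet_Ioi).mpr (Filter.Eventually.of_forall fun x hx => ?_)
    have hx0 : 0 < x := lt_of_le_of_lt hs hx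
    positivity

/-- Probabilistic core of Theorem 2 (average achievable rate): identity in `[0,∞]`
between `(1/K) E[log₂(1 + SINR)]` and the integral over `t ∈ (0,∞)` of the expectation
of the truncated exponential sum evaluated at `S_t = m (2^t - 1) R₀^α / (p₀ X)`. -/
theorem stmt_4 {Ω : Type*} [MeasurableSpace Ω] (P : Measure Ω) [IsProbabilityMeasure P]
    (G X I R₀ : Ω → ℝ) (hG : Measurable G) (hX : Measurable X) (hI : Measurable I)
    (hR₀ : Measurable R₀)
    (hGnn : ∀ᵐ ω ∂P, 0 ≤ G ω) (hInn : ∀ᵐ ω ∂P, 0 ≤ I ω)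
    (hXpos : ∀ᵐ ω ∂P, 0 < X ω) (hR₀pos : ∀ᵐ ω ∂P, 0 < R₀ ω)
    (m : ℕ) (hm : 1 ≤ m)
    (hGlaw : Measure.map G P = gammaMeasure (m : ℝ) (m : ℝ))
    (hindep : IndepFun G (fun ω => (X ω, I ω, R₀ ω)) P)
    (p₀ σ2 α : ℝ) (K : ℕ) (hp₀ : 0 < p₀) (hσ2 : 0 < σ2) (hα : 0 < α) (hK : 1 ≤ K) :
    (1 / (K : ENNReal)) *
        ∫⁻ ω, ENNReal.ofReal
          (Real.logb 2 (1 + p₀ * G ω * X ω * R₀ ω ^ (-α) / (I ω + σ2))) ∂P =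
      (1 / (K : ENNReal)) *
        ∫⁻ t in Set.Ioi (0 : ℝ),
          ∫⁻ ω, ENNReal.ofReal
            (Real.exp (-((m : ℝ) * ((2 : ℝ) ^ t - 1) * R₀ ω ^ α / (p₀ * X ω)) * (σ2 + I ω)) *
              ∑ k ∈ Finset.range m,
                ((m : ℝ) * ((2 : ℝ) ^ t - 1) * R₀ ω ^ α / (p₀ * X ω) * (σ2 + I ω)) ^ k /
                  (Nat.factorial k)) ∂P ∂volume := by
  congr 1
  -- setup
  set W : Ω → ℝ × ℝ × ℝ := fun ω => (X ω, I ω, R₀ ω) with hW_def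
  have hW : Measurable W := hX.prodMk (hI.prodMk hR₀)
  have hmap : Measure.map (fun ω => (W ω, G ω)) P = (P.map W).prod (P.map G) :=
    (indepFun_iff_map_prod_eq_prod_map_map hW.aemeasurable hG.aemeasurable).mp hindep.symm
  have hfmeas : Measurable
      (fun ω => Real.logb 2 (1 + p₀ * G ω * X ω * R₀ ω ^ (-α) / (I ω + σ2))) := by
    have h1 : Measurable (fun ω => 1 + p₀ * G ω * X ω * R₀ ω ^ (-α) / (I ω + σ2)) :=
      measurable_const.add ((((measurable_const.mul hG).mul hX).mul
        ((aux_measurable_rpow_const (-α)).comp hR₀)).div (hI.add measurable_const))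
    simp only [Real.logb]
    exact (Real.measurable_log.comp h1).div_const _
  have hfnn : 0 ≤ᵐ[P]
      (fun ω => Real.logb 2 (1 + p₀ * G ω * X ω * R₀ ω ^ (-α) / (I ω + σ2))) := by
    filter_upwards [hGnn, hInn, hXpos, hR₀pos] with ω h1 h2 h3 h4
    have hRα : 0 < R₀ ω ^ (-α) := Real.rpow_pos_of_pos h4 _
    have hY : 0 ≤ p₀ * G ω * X ω * R₀ ω ^ (-α) / (I ω + σ2) := by positivity
    exact Real.logb_nonneg one_lt_two (by linarith)
  rw [lintegral_eq_lintegral_meas_lt P hfnn hfmeas.aemeasurable]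
  refine setLIntegral_congr_fun measurableSet_Ioi (fun t ht => ?_)
  replace ht : (0:ℝ) < t := ht
  set c : ℝ := (2:ℝ) ^ t - 1 with hc
  have hc0 : 0 ≤ c := by
    have : (2:ℝ) ^ (0:ℝ) ≤ (2:ℝ) ^ t := Real.rpow_le_rpow_of_exponent_le one_le_two ht.le
    rw [Real.rpow_zero] at this
    simp only [hc]; linarith
  set φ : ℝ × ℝ × ℝ → ℝ := fun w => c * w.2.2 ^ α * (σ2 + w.2.1) / (p₀ * w.1) with hφ_def
  have hφ : Measurable φ := by
    refine Measurable.div ?_ ?_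
    · exact ((measurable_const.mul
        ((aux_measurable_rpow_const α).comp (measurable_snd.comp measurable_snd))).mul
        (measurable_const.add (measurable_fst.comp measurable_snd)))
    · exact measurable_const.mul measurable_fst
  have hA : MeasurableSet {p : (ℝ×ℝ×ℝ)×ℝ | φ p.1 < p.2} :=
    measurableSet_lt (hφ.comp measurable_fst) measurable_snd
  have hsets : {a | t < Real.logb 2 (1 + p₀ * G a * X a * R₀ a ^ (-α) / (I a + σ2))}
      =ᵐ[P] ((fun ω => (W ω, G ω)) ⁻¹' {p : (ℝ×ℝ×ℝ)×ℝ | φ p.1 < p.2}) := by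
    refine Filter.eventuallyEq_set.mpr ?_
    filter_upwards [hGnn, hInn, hXpos, hR₀pos] with ω h1 h2 h3 h4
    simp only [Set.mem_setOf_eq, Set.mem_preimage, hW_def, hφ_def]
    have hRα : 0 < R₀ ω ^ α := Real.rpow_pos_of_pos h4 _
    have hRnα : 0 < R₀ ω ^ (-α) := Real.rpow_pos_of_pos h4 _
    have hIσ : 0 < I ω + σ2 := by linarith
    have hpX : 0 < p₀ * X ω := by positivity
    have hY : 0 ≤ p₀ * G ω * X ω * R₀ ω ^ (-α) / (I ω + σ2) := by positivity
    rw [Real.lt_logb_iff_rpow_lt one_lt_two (by linarith)]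
    have hinv : R₀ ω ^ (-α) = (R₀ ω ^ α)⁻¹ := Real.rpow_neg h4.le α
    have e1 : p₀ * G ω * X ω * R₀ ω ^ (-α) / (I ω + σ2)
        = (G ω * (p₀ * X ω)) / (R₀ ω ^ α * (I ω + σ2)) := by
      rw [hinv, ← div_eq_mul_inv, div_div]
      rw [show p₀ * G ω * X ω = G ω * (p₀ * X ω) by ring]
    have hden : 0 < R₀ ω ^ α * (I ω + σ2) := by positivity
    constructor
    · intro h
      rw [div_lt_iff₀ hpX]
      have h' : c < (G ω * (p₀ * X ω)) / (R₀ ω ^ α * (I ω + σ2)) := by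
        rw [← e1]; simp only [hc]; linarith
      rw [lt_div_iff₀ hden] at h'
      linear_combination h'
    · intro h
      rw [div_lt_iff₀ hpX] at h
      have h' : c < (G ω * (p₀ * X ω)) / (R₀ ω ^ α * (I ω + σ2)) := by
        rw [lt_div_iff₀ hden]
        linear_combination h
      rw [← e1] at h'
      simp only [hc] at h'
      linarith
  rw [measure_congr hsets, ← Measure.map_apply (hW.prodMk hG) hA, hmap,
    Measure.prod_apply hA]
  have hsec : ∀ w : ℝ×ℝ×ℝ, (Prod.mk w ⁻¹' {p : (ℝ×ℝ×ℝ)×ℝ | φ p.1 < p.2}) = Set.Ioi (φ w) :=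
    fun w => rfl
  simp_rw [hsec]
  have hFmeas : Measurable (fun w : ℝ×ℝ×ℝ => (P.map G) (Set.Ioi (φ w))) := by
    exact (Antitone.measurable
      (fun a b hab => measure_mono (Set.Ioi_subset_Ioi hab))).comp hφ
  rw [lintegral_map hFmeas hW]
  refine lintegral_congr_ae ?_
  filter_upwards [hInn, hXpos, hR₀pos] with ω h2 h3 h4
  have hRα : 0 < R₀ ω ^ α := Real.rpow_pos_of_pos h4 _
  have hφnn : 0 ≤ φ (W ω) := by
    simp only [hφ_def, hW_def]
    exact div_nonneg (mul_nonneg (mul_nonneg hc0 hRα.le) (by linarith)) (by positivity)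
  have hm0 : (0:ℝ) < (m:ℝ) := by exact_mod_cast Nat.lt_of_lt_of_le Nat.zero_lt_one hm
  rw [hGlaw, aux_gamma_tail m hm (m:ℝ) hm0 _ hφnn]
  congr 1
  have harg : (m:ℝ) * φ (W ω) = ((m:ℝ) * c * R₀ ω ^ α / (p₀ * X ω)) * (σ2 + I ω) := by
    simp only [hφ_def, hW_def]
    ring
  rw [harg, neg_mul]
end
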